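/- Let K be a finite simplicial complex with a filtration given by a total order on simplices compatible with the face relation, and let two simplices σ₁, σ₂ that appear consecutively in the filtration order be transposed (assuming neither is a face of the other, so the result is again a filtration). Then the persistence pairing of the new filtration agrees with that of the old filtration on every pair not involving σ₁ or σ₂; only the pairs with σ₁ or σ₂ as an endpoint can change. -/

import Mathlib

open Matrix

/-- A finite abstract simplicial complex: a finite family of nonempty finite
sets closed under taking nonempty subsets. -/
def IsComplex (K : Finset (Finset ℕ)) : Prop :=
  (∀ τ ∈ K, τ.Nonempty) ∧ ∀ τ ∈ K, ∀ σ : Finset ℕ, σ ⊆ τ → σ.Nonempty → σ ∈ K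

/-- The simplices of the complex `K`. -/
abbrev Simp (K : Finset (Finset ℕ)) := {σ : Finset ℕ // σ ∈ K}

/-- A filtration order on the simplices, given by an injective position
function compatible with the face relation. -/
def IsSimpFiltration (K : Finset (Finset ℕ)) (pos : Simp K → ℕ) : Prop :=
  Function.Injective pos ∧ ∀ σ τ : Simp K, σ.1 ⊆ τ.1 → σ ≠ τ → pos σ < pos τ

/-- The (full) boundary matrix of `K` over `ℤ/2`. -/
def bdry (K : Finset (Finset ℕ)) : Matrix (Simp K) (Simp K) (ZMod 2) :=
  fun σ τ => if σ.1 ⊆ τ.1 ∧ σ.1.card + 1 = τ.1.card then 1 else 0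

/-- `σ` is the low of column `τ` of `R` with respect to the order `pos`:
the entry `R σ τ` is nonzero and `σ` is the last such row. -/
def IsLow (K : Finset (Finset ℕ)) (pos : Simp K → ℕ)
    (R : Matrix (Simp K) (Simp K) (ZMod 2)) (τ σ : Simp K) : Prop :=
  R σ τ ≠ 0 ∧ ∀ σ' : Simp K, R σ' τ ≠ 0 → pos σ' ≤ pos σ

/-- `(σ, τ)` is a persistence pair of the filtration `pos`: in some (hence, by
pairing uniqueness, any) reduced decomposition `R = D V` of the boundary matrix,
with `V` invertible and upper-triangular with respect to `pos`, the low of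
column `τ` is `σ`. -/
def PersPair (K : Finset (Finset ℕ)) (pos : Simp K → ℕ) (σ τ : Simp K) : Prop :=
  ∃ R Vm : Matrix (Simp K) (Simp K) (ZMod 2),
    (∀ a b : Simp K, pos b < pos a → Vm a b = 0) ∧ IsUnit Vm ∧
    R = bdry K * Vm ∧
    (∀ τ₁ τ₂ s : Simp K, IsLow K pos R τ₁ s → IsLow K pos R τ₂ s → τ₁ = τ₂) ∧
    IsLow K pos R τ σ

section Aux

variable {K : Finset (Finset ℕ)}

lemma zmod2_eq_one : ∀ x : ZMod 2, x ≠ 0 → x = 1 := by decide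

lemma zmod2_add_self : ∀ x : ZMod 2, x + x = 0 := by decide

instance instDecIsLow (q : Simp K → ℕ) (R : Matrix (Simp K) (Simp K) (ZMod 2)) (τ σ : Simp K) :
    Decidable (IsLow K q R τ σ) :=
  decidable_of_iff (R σ τ ≠ 0 ∧ ∀ σ' : Simp K, R σ' τ ≠ 0 → q σ' ≤ q σ) Iff.rfl

lemma isLow_unique {q : Simp K → ℕ} (hq : Function.Injective q)
    {R : Matrix (Simp K) (Simp K) (ZMod 2)} {t s s' : Simp K}
    (h : IsLow K q R t s) (h' : IsLow K q R t s') : s = s' :=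
  hq (le_antisymm (h'.2 _ h.1) (h.2 _ h'.1))

lemma exists_isLow (q : Simp K → ℕ) (R : Matrix (Simp K) (Simp K) (ZMod 2)) {t : Simp K}
    (h : ∃ s, R s t ≠ 0) : ∃ s, IsLow K q R t s := by
  obtain ⟨s0, hs0⟩ := h
  obtain ⟨s, hs, hmax⟩ := Finset.exists_max_image (Finset.univ.filter fun s => R s t ≠ 0) q
    ⟨s0, by simp [hs0]⟩
  exact ⟨s, by simpa using (Finset.mem_filter.1 hs).2, fun s' h' => hmax s' (by simp [h'])⟩

/-! ### Transvections -/

def Tv (a b : Simp K) : Matrix (Simp K) (Simp K) (ZMod 2) := 1 + Matrix.single a b 1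

lemma mul_Tv_apply (M : Matrix (Simp K) (Simp K) (ZMod 2)) (a b s t : Simp K) :
    (M * Tv a b) s t = M s t + if t = b then M s a else 0 := by
  rw [Tv, Matrix.mul_add, Matrix.mul_one, Matrix.add_apply]
  congr 1
  rw [Matrix.mul_apply]
  simp only [Matrix.single, Matrix.of_apply, mul_ite, mul_one, mul_zero]
  by_cases h : t = b
  · subst h
    simp only [and_true]
    rw [Finset.sum_ite_eq Finset.univ a (fun u => M s u)]
    simp
  · rw [if_neg h]
    exact Finset.sum_eq_zero fun x _ => if_neg (by rintro ⟨h1, h2⟩; exact h h2.symm)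

lemma Tv_mul_self {a b : Simp K} (h : a ≠ b) : Tv a b * Tv a b = (1 : Matrix (Simp K) (Simp K) (ZMod 2)) := by
  have hE : Matrix.single a b (1 : ZMod 2) * Matrix.single a b 1 = 0 :=
    Matrix.single_mul_single_of_ne (c := (1 : ZMod 2)) (i := a) (j := b) (k := a) (h := show b ≠ a from fun hba => h hba.symm) (d := 1)
  have hEE : Matrix.single a b (1 : ZMod 2) + Matrix.single a b 1 = 0 := by
    ext i j; rw [Matrix.add_apply]; exact zmod2_add_self _
  rw [Tv, add_mul, one_mul, mul_add, mul_one, hE, add_zero, add_assoc, hEE, add_zero]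

lemma isUnit_Tv {a b : Simp K} (h : a ≠ b) : IsUnit (Tv a b) :=
  ⟨⟨Tv a b, Tv a b, Tv_mul_self h, Tv_mul_self h⟩, rfl⟩

end Aux

section Corner

variable {K : Finset (Finset ℕ)}

/-- Diagonal 0/1 mask matrix for a predicate. -/
def msk (S : Simp K → Prop) [DecidablePred S] : Matrix (Simp K) (Simp K) (ZMod 2) :=
  Matrix.diagonal (fun s => if S s then 1 else 0)

lemma corner_apply (R : Matrix (Simp K) (Simp K) (ZMod 2)) (S T : Simp K → Prop)
    [DecidablePred S] [DecidablePred T] (s t : Simp K) :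
    (msk S * R * msk T) s t = if S s ∧ T t then R s t else 0 := by
  rw [msk, msk, Matrix.mul_diagonal, Matrix.diagonal_mul]
  by_cases hs : S s <;> by_cases ht : T t <;> simp [hs, ht]

lemma absorb (q : Simp K → ℕ) {V : Matrix (Simp K) (Simp K) (ZMod 2)}
    (htri : ∀ a b, q b < q a → V a b = 0) (T : Simp K → Prop) [DecidablePred T]
    (hT : ∀ a b, T b → q a ≤ q b → T a) :
    V * msk T = msk T * (V * msk T) := by
  ext u t
  rw [msk, Matrix.mul_diagonal, Matrix.diagonal_mul]
  by_cases ht : T t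
  · by_cases hv : V u t = 0
    · simp [ht, hv]
    · have hu : T u := hT u t ht (not_lt.1 fun hlt => hv (htri u t hlt))
      simp [ht, hu]
  · simp [ht]

lemma rank_corner_eq (q : Simp K → ℕ) (D : Matrix (Simp K) (Simp K) (ZMod 2))
    {V : Matrix (Simp K) (Simp K) (ZMod 2)}
    (htri : ∀ a b, q b < q a → V a b = 0) (hunit : IsUnit V)
    (S T : Simp K → Prop) [DecidablePred S] [DecidablePred T]
    (hT : ∀ a b, T b → q a ≤ q b → T a) :
    (msk S * (D * V) * msk T).rank = (msk S * D * msk T).rank := by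
  have hdet : IsUnit V.det := (Matrix.isUnit_iff_isUnit_det V).1 hunit
  have h1 : msk S * (D * V) * msk T = (msk S * D * msk T) * (V * msk T) := by
    simp only [Matrix.mul_assoc]
    conv_lhs => rw [absorb q htri T hT]
  have hVinv : ∀ a b, q b < q a → V⁻¹ a b = 0 := by
    letI := hunit.invertible
    exact fun a b hba => Matrix.blockTriangular_inv_of_blockTriangular htri hba
  have h2 : msk S * D * msk T = (msk S * (D * V) * msk T) * (V⁻¹ * msk T) := by
    simp only [Matrix.mul_assoc]
    conv_rhs => rw [← absorb q hVinv T hT, ← Matrix.mul_assoc V V⁻¹ (msk T),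
      Matrix.mul_nonsing_inv _ hdet, Matrix.one_mul]
  apply le_antisymm
  · rw [h1]; exact Matrix.rank_mul_le_left _ _
  · rw [h2]; exact Matrix.rank_mul_le_left _ _

end Corner

section RankCard

variable {K : Finset (Finset ℕ)}

/-- The rank of a matrix with pairwise-distinct lows is the number of nonzero columns. -/
lemma rank_eq_card (q : Simp K → ℕ) (hq : Function.Injective q)
    (M : Matrix (Simp K) (Simp K) (ZMod 2))
    (hred : ∀ t₁ t₂ s, IsLow K q M t₁ s → IsLow K q M t₂ s → t₁ = t₂) :
    M.rank = (Finset.univ.filter fun t => ∃ s, M s t ≠ 0).card := by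
  classical
  set Z : Set (Simp K) := {t | ∃ s, M s t ≠ 0} with hZ
  set v : Z → (Simp K → ZMod 2) := fun t => Mᵀ t.1 with hv
  have hlw : ∀ t : Z, ∃ s, IsLow K q M t.1 s := fun t => exists_isLow q M t.2
  set lw : Z → Simp K := fun t => Classical.choose (hlw t) with hlwdef
  have hlow : ∀ t : Z, IsLow K q M t.1 (lw t) := fun t => Classical.choose_spec (hlw t)
  have hli : LinearIndependent (ZMod 2) v := by
    rw [linearIndependent_iff']
    intro sf g hsum i hi
    by_contra hgi
    set s' : Finset Z := sf.filter fun t => g t ≠ 0 with hs'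
    obtain ⟨tm, htm, hmax⟩ := Finset.exists_max_image s' (fun t => q (lw t)) ⟨i, by simp [hs', hi, hgi]⟩
    have htmsf : tm ∈ sf := (Finset.mem_filter.1 htm).1
    have hgtm : g tm ≠ 0 := (Finset.mem_filter.1 htm).2
    have heval := congrFun hsum (lw tm)
    rw [Finset.sum_apply] at heval
    have hsingle : ∑ t ∈ sf, (g t • v t) (lw tm) = g tm * M (lw tm) tm.1 := by
      rw [Finset.sum_eq_single tm]
      · simp [hv]
      · intro b hb hbne
        by_cases hgb : g b = 0
        · simp [hgb]
        · have hbmem : b ∈ s' := Finset.mem_filter.2 ⟨hb, hgb⟩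
          have hMb : M (lw tm) b.1 = 0 := by
            by_contra hMb
            have h1 : q (lw tm) ≤ q (lw b) := (hlow b).2 _ hMb
            have h2 : q (lw b) ≤ q (lw tm) := hmax b hbmem
            have : lw b = lw tm := hq (le_antisymm h2 h1)
            exact hbne (Subtype.ext (hred b.1 tm.1 (lw tm) (this ▸ hlow b) (hlow tm)))
          simp [hv, hMb]
      · intro h; exact absurd htmsf h
    rw [hsingle] at heval
    rcases mul_eq_zero.1 heval with h | h
    · exact hgtm h
    · exact (hlow tm).1 h
  have hspan : Submodule.span (ZMod 2) (Set.range Mᵀ) = Submodule.span (ZMod 2) (Mᵀ '' Z) := by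
    apply le_antisymm
    · rw [Submodule.span_le]
      rintro x ⟨t, rfl⟩
      by_cases ht : t ∈ Z
      · exact Submodule.subset_span ⟨t, ht, rfl⟩
      · have : Mᵀ t = 0 := by
          funext s
          have : ¬ ∃ s, M s t ≠ 0 := ht
          push_neg at this
          exact this s
        rw [this]
        exact Submodule.zero_mem _
    · exact Submodule.span_mono (Set.image_subset_range _ _)
  rw [Matrix.rank_eq_finrank_span_cols, show M.col = Mᵀ from rfl, hspan, show Mᵀ '' Z = Set.range v from Set.image_eq_range _ _,
    finrank_span_eq_card hli]
  exact (Fintype.card_congr (Equiv.refl _)).trans (Fintype.card_subtype (fun t => ∃ s, M s t ≠ 0))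

end RankCard

section Counting

variable {K : Finset (Finset ℕ)}

lemma isLow_corner (q : Simp K → ℕ) (hq : Function.Injective q)
    (R : Matrix (Simp K) (Simp K) (ZMod 2)) (S T : Simp K → Prop)
    [DecidablePred S] [DecidablePred T] (hS : ∀ a b, S a → q a ≤ q b → S b)
    (t s : Simp K) :
    IsLow K q (msk S * R * msk T) t s ↔ T t ∧ S s ∧ IsLow K q R t s := by
  constructor
  · rintro ⟨hne, hmax⟩
    rw [corner_apply] at hne
    by_cases hc : S s ∧ T t
    · obtain ⟨hSs, hTt⟩ := hc
      have hRst : R s t ≠ 0 := by rwa [if_pos ⟨hSs, hTt⟩] at hne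
      obtain ⟨s0, hs0⟩ := exists_isLow q R ⟨s, hRst⟩
      have hSs0 : S s0 := hS s s0 hSs (hs0.2 _ hRst)
      have h1 : q s0 ≤ q s := hmax s0 (by rw [corner_apply, if_pos ⟨hSs0, hTt⟩]; exact hs0.1)
      have : s = s0 := hq (le_antisymm (hs0.2 _ hRst) h1)
      exact ⟨hTt, hSs, this ▸ hs0⟩
    · rw [if_neg hc] at hne; exact absurd rfl hne
  · rintro ⟨hTt, hSs, hlow⟩
    refine ⟨by rw [corner_apply, if_pos ⟨hSs, hTt⟩]; exact hlow.1, fun s' hs' => ?_⟩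
    rw [corner_apply] at hs'
    by_cases hc : S s' ∧ T t
    · exact hlow.2 s' (by rwa [if_pos hc] at hs')
    · rw [if_neg hc] at hs'; exact absurd rfl hs'

lemma col_nonzero_corner (q : Simp K → ℕ) (R : Matrix (Simp K) (Simp K) (ZMod 2))
    (S T : Simp K → Prop) [DecidablePred S] [DecidablePred T]
    (hS : ∀ a b, S a → q a ≤ q b → S b) (t : Simp K) :
    (∃ s, (msk S * R * msk T) s t ≠ 0) ↔ T t ∧ ∃ s, S s ∧ IsLow K q R t s := by
  constructor
  · rintro ⟨s, hs⟩
    rw [corner_apply] at hs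
    by_cases hc : S s ∧ T t
    · have hRst : R s t ≠ 0 := by rwa [if_pos hc] at hs
      obtain ⟨s0, hs0⟩ := exists_isLow q R ⟨s, hRst⟩
      exact ⟨hc.2, s0, hS s s0 hc.1 (hs0.2 _ hRst), hs0⟩
    · rw [if_neg hc] at hs; exact absurd rfl hs
  · rintro ⟨hTt, s, hSs, hlow⟩
    exact ⟨s, by rw [corner_apply, if_pos ⟨hSs, hTt⟩]; exact hlow.1⟩

/-- Number of columns in `T` whose low lies in `S`. -/
def pivCount (q : Simp K → ℕ) (R : Matrix (Simp K) (Simp K) (ZMod 2))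
    (S T : Simp K → Prop) [DecidablePred S] [DecidablePred T] : ℕ :=
  (Finset.univ.filter fun t => T t ∧ ∃ s, S s ∧ IsLow K q R t s).card

lemma corner_rank_card (q : Simp K → ℕ) (hq : Function.Injective q)
    (D : Matrix (Simp K) (Simp K) (ZMod 2)) {R V : Matrix (Simp K) (Simp K) (ZMod 2)}
    (htri : ∀ a b, q b < q a → V a b = 0) (hunit : IsUnit V) (hRV : R = D * V)
    (hred : ∀ t₁ t₂ s, IsLow K q R t₁ s → IsLow K q R t₂ s → t₁ = t₂)
    (S T : Simp K → Prop) [DecidablePred S] [DecidablePred T]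
    (hS : ∀ a b, S a → q a ≤ q b → S b) (hT : ∀ a b, T b → q a ≤ q b → T a) :
    (msk S * D * msk T).rank = pivCount q R S T := by
  rw [← rank_corner_eq q D htri hunit S T hT, ← hRV]
  rw [rank_eq_card q hq _ (fun t₁ t₂ s h1 h2 =>
    hred t₁ t₂ s ((isLow_corner q hq R S T hS t₁ s).1 h1).2.2
      ((isLow_corner q hq R S T hS t₂ s).1 h2).2.2)]
  rw [pivCount]
  congr 1
  apply Finset.filter_congr
  intro t _
  exact col_nonzero_corner q R S T hS t

lemma pivCount_le_split (q : Simp K → ℕ) (hq : Function.Injective q)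
    (R : Matrix (Simp K) (Simp K) (ZMod 2)) (τ : Simp K)
    (S : Simp K → Prop) [DecidablePred S] :
    pivCount q R S (fun t => q t ≤ q τ)
      = pivCount q R S (fun t => q t < q τ)
        + (if ∃ s, S s ∧ IsLow K q R τ s then 1 else 0) := by
  classical
  rw [pivCount, pivCount]
  have hsplit : (Finset.univ.filter fun t => (q t ≤ q τ) ∧ ∃ s, S s ∧ IsLow K q R t s)
      = (Finset.univ.filter fun t => (q t < q τ) ∧ ∃ s, S s ∧ IsLow K q R t s)
        ∪ (Finset.univ.filter fun t => t = τ ∧ ∃ s, S s ∧ IsLow K q R t s) := by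
    ext t
    simp only [Finset.mem_filter, Finset.mem_union, Finset.mem_univ, true_and]
    constructor
    · rintro ⟨hle, hp⟩
      rcases lt_or_eq_of_le hle with h | h
      · exact Or.inl ⟨h, hp⟩
      · exact Or.inr ⟨hq h, hp⟩
    · rintro (⟨h, hp⟩ | ⟨rfl, hp⟩)
      · exact ⟨le_of_lt h, hp⟩
      · exact ⟨le_rfl, hp⟩
  rw [hsplit, Finset.card_union_of_disjoint]
  · congr 1
    by_cases hp : ∃ s, S s ∧ IsLow K q R τ s
    · rw [if_pos hp]
      rw [show (Finset.univ.filter fun t => t = τ ∧ ∃ s, S s ∧ IsLow K q R t s) = {τ} from ?_]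
      · exact Finset.card_singleton τ
      · ext t
        simp only [Finset.mem_filter, Finset.mem_univ, true_and, Finset.mem_singleton]
        constructor
        · rintro ⟨rfl, _⟩; rfl
        · rintro rfl; exact ⟨rfl, hp⟩
    · rw [if_neg hp]
      rw [Finset.card_eq_zero]
      ext t
      simp only [Finset.mem_filter, Finset.mem_univ, true_and, Finset.notMem_empty, iff_false]
      rintro ⟨rfl, hs⟩
      exact hp hs
  · rw [Finset.disjoint_left]
    rintro t ht ht'
    have hlt : q t < q τ := (Finset.mem_filter.1 ht).2.1
    have heq : t = τ := (Finset.mem_filter.1 ht').2.1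
    rw [heq] at hlt
    exact lt_irrefl _ hlt

lemma isLow_iff_counts (q : Simp K → ℕ) (hq : Function.Injective q)
    {R : Matrix (Simp K) (Simp K) (ZMod 2)} (σ τ : Simp K) :
    IsLow K q R τ σ ↔
      pivCount q R (fun s => q σ ≤ q s) (fun t => q t ≤ q τ)
        + pivCount q R (fun s => q σ < q s) (fun t => q t < q τ)
      = pivCount q R (fun s => q σ < q s) (fun t => q t ≤ q τ)
        + pivCount q R (fun s => q σ ≤ q s) (fun t => q t < q τ) + 1 := by
  classical
  rw [pivCount_le_split q hq R τ (fun s => q σ ≤ q s),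
    pivCount_le_split q hq R τ (fun s => q σ < q s)]
  by_cases h2 : ∃ s, (q σ < q s) ∧ IsLow K q R τ s
  · have h1 : ∃ s, (q σ ≤ q s) ∧ IsLow K q R τ s := by
      obtain ⟨s, hs, hl⟩ := h2; exact ⟨s, le_of_lt hs, hl⟩
    have hnl : ¬ IsLow K q R τ σ := by
      intro hl
      obtain ⟨s, hs, hl'⟩ := h2
      rw [isLow_unique hq hl hl'] at hs
      exact lt_irrefl _ hs
    simp only [if_pos h1, if_pos h2]
    constructor
    · intro h; exact absurd h hnl
    · intro h; omega
  · by_cases h1 : ∃ s, (q σ ≤ q s) ∧ IsLow K q R τ s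
    · have hl : IsLow K q R τ σ := by
        obtain ⟨s, hs, hl⟩ := h1
        have : ¬ q σ < q s := fun h => h2 ⟨s, h, hl⟩
        have : s = σ := hq (le_antisymm (not_lt.1 this) hs)
        exact this ▸ hl
      simp only [if_pos h1, if_neg h2]
      constructor
      · intro _; omega
      · intro _; exact hl
    · have hnl : ¬ IsLow K q R τ σ := fun hl => h1 ⟨σ, le_rfl, hl⟩
      simp only [if_neg h1, if_neg h2]
      constructor
      · intro h; exact absurd h hnl
      · intro h; omega

end Counting

section Existence

variable {K : Finset (Finset ℕ)}

/-- Height of a column: one plus the position of its last nonzero entry. -/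
def colH (q : Simp K → ℕ) (R : Matrix (Simp K) (Simp K) (ZMod 2)) (t : Simp K) : ℕ :=
  (Finset.univ.filter fun s => R s t ≠ 0).sup fun s => q s + 1

def meas (q : Simp K → ℕ) (R : Matrix (Simp K) (Simp K) (ZMod 2)) : ℕ :=
  ∑ t, colH q R t

lemma step_aux (q : Simp K → ℕ) (hq : Function.Injective q)
    (D : Matrix (Simp K) (Simp K) (ZMod 2)) {R V : Matrix (Simp K) (Simp K) (ZMod 2)}
    (htri : ∀ a b, q b < q a → V a b = 0) (hunit : IsUnit V) (hRV : R = D * V)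
    {t₁ t₂ s : Simp K} (h1 : IsLow K q R t₁ s) (h2 : IsLow K q R t₂ s)
    (hlt : q t₁ < q t₂) :
    ∃ R' V' : Matrix (Simp K) (Simp K) (ZMod 2),
      (∀ a b, q b < q a → V' a b = 0) ∧ IsUnit V' ∧ R' = D * V' ∧
        meas q R' < meas q R := by
  have hne : t₁ ≠ t₂ := fun h => lt_irrefl _ (h ▸ hlt)
  refine ⟨R * Tv t₁ t₂, V * Tv t₁ t₂, ?_, hunit.mul (isUnit_Tv hne), by
    rw [hRV, Matrix.mul_assoc], ?_⟩
  · intro a b hba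
    rw [mul_Tv_apply]
    by_cases hb : b = t₂
    · rw [if_pos hb, htri a b hba, htri a t₁ (by rw [← hb] at hlt; exact lt_trans hlt hba), add_zero]
    · rw [htri a b hba, if_neg hb, add_zero]
  · have hcol : ∀ t, t ≠ t₂ → colH q (R * Tv t₁ t₂) t = colH q R t := by
      intro t ht
      unfold colH
      congr 1
      apply Finset.filter_congr
      intro a _
      rw [mul_Tv_apply, if_neg ht, add_zero]
    have hstrict : colH q (R * Tv t₁ t₂) t₂ < colH q R t₂ := by
      have hub : colH q (R * Tv t₁ t₂) t₂ ≤ q s := by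
        apply Finset.sup_le
        intro a ha
        have hane : (R * Tv t₁ t₂) a t₂ ≠ 0 := (Finset.mem_filter.1 ha).2
        rw [mul_Tv_apply, if_pos rfl] at hane
        rcases lt_trichotomy (q a) (q s) with h | h | h
        · omega
        · exfalso
          have : a = s := hq h
          subst this
          rw [zmod2_eq_one _ h1.1, zmod2_eq_one _ h2.1] at hane
          exact hane (by decide)
        · exfalso
          have ha2 : R a t₂ = 0 := by
            by_contra hc; exact absurd (h2.2 a hc) (not_le.2 h)
          have ha1 : R a t₁ = 0 := by
            by_contra hc; exact absurd (h1.2 a hc) (not_le.2 h)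
          rw [ha1, ha2, add_zero] at hane
          exact hane rfl
      have hlb : q s + 1 ≤ colH q R t₂ :=
        Finset.le_sup (f := fun s => q s + 1) (by simp [h2.1])
      omega
    rw [meas, meas]
    apply Finset.sum_lt_sum (fun t _ => ?_) ⟨t₂, Finset.mem_univ t₂, hstrict⟩
    by_cases ht : t = t₂
    · subst ht; exact le_of_lt hstrict
    · rw [hcol t ht]

lemma exists_reduced (q : Simp K → ℕ) (hq : Function.Injective q)
    (D : Matrix (Simp K) (Simp K) (ZMod 2)) :
    ∃ R V : Matrix (Simp K) (Simp K) (ZMod 2),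
      (∀ a b, q b < q a → V a b = 0) ∧ IsUnit V ∧ R = D * V ∧
        (∀ τ₁ τ₂ s, IsLow K q R τ₁ s → IsLow K q R τ₂ s → τ₁ = τ₂) := by
  suffices H : ∀ n (R V : Matrix (Simp K) (Simp K) (ZMod 2)),
      (∀ a b, q b < q a → V a b = 0) → IsUnit V → R = D * V → meas q R ≤ n →
      ∃ R' V' : Matrix (Simp K) (Simp K) (ZMod 2),
        (∀ a b, q b < q a → V' a b = 0) ∧ IsUnit V' ∧ R' = D * V' ∧
          (∀ τ₁ τ₂ s, IsLow K q R' τ₁ s → IsLow K q R' τ₂ s → τ₁ = τ₂) by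
    exact H (meas q D) D 1
      (fun a b h => Matrix.one_apply_ne (fun e => by subst e; exact lt_irrefl _ h))
      isUnit_one (by rw [Matrix.mul_one]) le_rfl
  intro n
  induction n with
  | zero =>
    intro R V htri hunit hRV hm
    by_cases hr : ∀ τ₁ τ₂ s, IsLow K q R τ₁ s → IsLow K q R τ₂ s → τ₁ = τ₂
    · exact ⟨R, V, htri, hunit, hRV, hr⟩
    · exfalso
      push_neg at hr
      obtain ⟨a, b, s, hla, hlb, hab⟩ := hr
      have h1 : q s + 1 ≤ colH q R a :=
        Finset.le_sup (f := fun s => q s + 1) (by simp [hla.1])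
      have h2 : colH q R a ≤ meas q R :=
        Finset.single_le_sum (fun _ _ => Nat.zero_le _) (Finset.mem_univ a)
      omega
  | succ n ih =>
    intro R V htri hunit hRV hm
    by_cases hr : ∀ τ₁ τ₂ s, IsLow K q R τ₁ s → IsLow K q R τ₂ s → τ₁ = τ₂
    · exact ⟨R, V, htri, hunit, hRV, hr⟩
    · push_neg at hr
      obtain ⟨a, b, s, hla, hlb, hab⟩ := hr
      have hne : q a ≠ q b := fun h => hab (hq h)
      rcases lt_or_gt_of_ne hne with h | h
      · obtain ⟨R', V', k1, k2, k3, k4⟩ := step_aux q hq D htri hunit hRV hla hlb h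
        exact ih R' V' k1 k2 k3 (by omega)
      · obtain ⟨R', V', k1, k2, k3, k4⟩ := step_aux q hq D htri hunit hRV hlb hla h
        exact ih R' V' k1 k2 k3 (by omega)

end Existence

section Main

variable {K : Finset (Finset ℕ)}

/-- The rank condition characterizing the persistence pair `(σ, τ)`. -/
def RC (K : Finset (Finset ℕ)) (q : Simp K → ℕ) (σ τ : Simp K) : Prop :=
  (msk (fun s => q σ ≤ q s) * bdry K * msk (fun t => q t ≤ q τ)).rank
    + (msk (fun s => q σ < q s) * bdry K * msk (fun t => q t < q τ)).rank
  = (msk (fun s => q σ < q s) * bdry K * msk (fun t => q t ≤ q τ)).rank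
    + (msk (fun s => q σ ≤ q s) * bdry K * msk (fun t => q t < q τ)).rank + 1

lemma persPair_iff_RC (q : Simp K → ℕ) (hq : Function.Injective q) (σ τ : Simp K) :
    PersPair K q σ τ ↔ RC K q σ τ := by
  constructor
  · rintro ⟨R, V, htri, hunit, hRV, hred, hlow⟩
    have c11 := corner_rank_card q hq (bdry K) htri hunit hRV hred
      (fun s => q σ ≤ q s) (fun t => q t ≤ q τ)
      (fun a b ha hab => le_trans ha hab) (fun a b hb hab => le_trans hab hb)
    have c22 := corner_rank_card q hq (bdry K) htri hunit hRV hred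
      (fun s => q σ < q s) (fun t => q t < q τ)
      (fun a b ha hab => lt_of_lt_of_le ha hab) (fun a b hb hab => lt_of_le_of_lt hab hb)
    have c21 := corner_rank_card q hq (bdry K) htri hunit hRV hred
      (fun s => q σ < q s) (fun t => q t ≤ q τ)
      (fun a b ha hab => lt_of_lt_of_le ha hab) (fun a b hb hab => le_trans hab hb)
    have c12 := corner_rank_card q hq (bdry K) htri hunit hRV hred
      (fun s => q σ ≤ q s) (fun t => q t < q τ)
      (fun a b ha hab => le_trans ha hab) (fun a b hb hab => lt_of_le_of_lt hab hb)
    rw [RC, c11, c22, c21, c12]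
    exact (isLow_iff_counts q hq σ τ).1 hlow
  · intro h
    obtain ⟨R, V, htri, hunit, hRV, hred⟩ := exists_reduced q hq (bdry K)
    have c11 := corner_rank_card q hq (bdry K) htri hunit hRV hred
      (fun s => q σ ≤ q s) (fun t => q t ≤ q τ)
      (fun a b ha hab => le_trans ha hab) (fun a b hb hab => le_trans hab hb)
    have c22 := corner_rank_card q hq (bdry K) htri hunit hRV hred
      (fun s => q σ < q s) (fun t => q t < q τ)
      (fun a b ha hab => lt_of_lt_of_le ha hab) (fun a b hb hab => lt_of_le_of_lt hab hb)
    have c21 := corner_rank_card q hq (bdry K) htri hunit hRV hred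
      (fun s => q σ < q s) (fun t => q t ≤ q τ)
      (fun a b ha hab => lt_of_lt_of_le ha hab) (fun a b hb hab => le_trans hab hb)
    have c12 := corner_rank_card q hq (bdry K) htri hunit hRV hred
      (fun s => q σ ≤ q s) (fun t => q t < q τ)
      (fun a b ha hab => le_trans ha hab) (fun a b hb hab => lt_of_le_of_lt hab hb)
    rw [RC, c11, c22, c21, c12] at h
    exact ⟨R, V, htri, hunit, hRV, hred, (isLow_iff_counts q hq σ τ).2 h⟩

end Main


/-- Transposition stability: transposing two consecutive simplices `σ₁, σ₂` of
a filtration (neither a face of the other) changes only the persistence pairs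
involving `σ₁` or `σ₂`; every pair with neither endpoint in `{σ₁, σ₂}` is the
same before and after. -/
theorem transposition_stability (K : Finset (Finset ℕ)) (hK : IsComplex K)
    (pos : Simp K → ℕ) (hpos : IsSimpFiltration K pos)
    (σ₁ σ₂ : Simp K) (hne : σ₁ ≠ σ₂)
    (hconsec : pos σ₂ = pos σ₁ + 1)
    (hface₁ : ¬ σ₁.1 ⊆ σ₂.1) (hface₂ : ¬ σ₂.1 ⊆ σ₁.1)
    (pos' : Simp K → ℕ)
    (hpos' : ∀ s : Simp K,
      pos' s = if s = σ₁ then pos σ₂ else if s = σ₂ then pos σ₁ else pos s) :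
    ∀ σ τ : Simp K, σ ≠ σ₁ → σ ≠ σ₂ → τ ≠ σ₁ → τ ≠ σ₂ →
      (PersPair K pos σ τ ↔ PersPair K pos' σ τ) := by

  intro σ τ hs1 hs2 ht1 ht2
  have hq : Function.Injective pos := hpos.1
  have hv1 : pos' σ₁ = pos σ₂ := by rw [hpos' σ₁]; simp
  have hv2 : pos' σ₂ = pos σ₁ := by rw [hpos' σ₂]; simp [Ne.symm hne]
  have hv3 : ∀ s, s ≠ σ₁ → s ≠ σ₂ → pos' s = pos s := by
    intro s h1 h2; rw [hpos' s]; simp [h1, h2]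
  have hq' : Function.Injective pos' := by
    intro a b h
    by_cases ha1 : a = σ₁
    · by_cases hb1 : b = σ₁
      · rw [ha1, hb1]
      · by_cases hb2 : b = σ₂
        · subst ha1; subst hb2
          rw [hv1, hv2] at h
          omega
        · subst ha1
          rw [hv1, hv3 b hb1 hb2] at h
          exact absurd (hq h).symm hb2
    · by_cases ha2 : a = σ₂
      · by_cases hb1 : b = σ₁
        · subst ha2; subst hb1
          rw [hv2, hv1] at h
          omega
        · by_cases hb2 : b = σ₂
          · rw [ha2, hb2]
          · subst ha2
            rw [hv2, hv3 b hb1 hb2] at h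
            exact absurd (hq h).symm hb1
      · by_cases hb1 : b = σ₁
        · subst hb1
          rw [hv1, hv3 a ha1 ha2] at h
          exact absurd (hq h) ha2
        · by_cases hb2 : b = σ₂
          · subst hb2
            rw [hv2, hv3 a ha1 ha2] at h
            exact absurd (hq h) ha1
          · rw [hv3 a ha1 ha2, hv3 b hb1 hb2] at h
            exact hq h
  have keyle : ∀ ρ : Simp K, ρ ≠ σ₁ → ρ ≠ σ₂ → ∀ s : Simp K,
      ((pos ρ ≤ pos s ↔ pos' ρ ≤ pos' s) ∧ (pos ρ < pos s ↔ pos' ρ < pos' s) ∧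
       (pos s ≤ pos ρ ↔ pos' s ≤ pos' ρ) ∧ (pos s < pos ρ ↔ pos' s < pos' ρ)) := by
    intro ρ h1 h2 s
    have hρ : pos' ρ = pos ρ := hv3 ρ h1 h2
    have hρ1 : pos ρ ≠ pos σ₁ := fun h => h1 (hq h)
    have hρ2 : pos ρ ≠ pos σ₂ := fun h => h2 (hq h)
    by_cases hsa : s = σ₁
    · subst hsa; rw [hρ, hv1]; omega
    · by_cases hsb : s = σ₂
      · subst hsb; rw [hρ, hv2]; omega
      · rw [hρ, hv3 s hsa hsb]; omega
  have e1 : msk (K := K) (fun s => pos σ ≤ pos s) = msk (fun s => pos' σ ≤ pos' s) := by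
    have hfun : (fun s => if pos σ ≤ pos s then (1 : ZMod 2) else 0)
        = (fun s => if pos' σ ≤ pos' s then (1 : ZMod 2) else 0) := by
      funext s
      have hiff := (keyle σ hs1 hs2 s).1
      simp only [hiff]
    rw [msk, msk, hfun]
  have e2 : msk (K := K) (fun s => pos σ < pos s) = msk (fun s => pos' σ < pos' s) := by
    have hfun : (fun s => if pos σ < pos s then (1 : ZMod 2) else 0)
        = (fun s => if pos' σ < pos' s then (1 : ZMod 2) else 0) := by
      funext s
      have hiff := (keyle σ hs1 hs2 s).2.1
      simp only [hiff]
    rw [msk, msk, hfun]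
  have e3 : msk (K := K) (fun t => pos t ≤ pos τ) = msk (fun t => pos' t ≤ pos' τ) := by
    have hfun : (fun t => if pos t ≤ pos τ then (1 : ZMod 2) else 0)
        = (fun t => if pos' t ≤ pos' τ then (1 : ZMod 2) else 0) := by
      funext t
      have hiff := (keyle τ ht1 ht2 t).2.2.1
      simp only [hiff]
    rw [msk, msk, hfun]
  have e4 : msk (K := K) (fun t => pos t < pos τ) = msk (fun t => pos' t < pos' τ) := by
    have hfun : (fun t => if pos t < pos τ then (1 : ZMod 2) else 0)
        = (fun t => if pos' t < pos' τ then (1 : ZMod 2) else 0) := by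
      funext t
      have hiff := (keyle τ ht1 ht2 t).2.2.2
      simp only [hiff]
    rw [msk, msk, hfun]
  rw [persPair_iff_RC pos hq σ τ, persPair_iff_RC pos' hq' σ τ, RC, RC, e1, e2, e3, e4]
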